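/- Let n ≥ 2. There exists a dimensional constant c > 0 such that for all measurable matrix fields A, B : 𝕋^n → Sym^+(n) with ‖A‖, ‖B‖ ∈ L^{n/(n−1)}([0,1]^n), one has ∫_{[0,1]^n} |det(A(x))^{1/(n−1)} − det(B(x))^{1/(n−1)}| dx ≤ c^{1/(n−1)} ( ∫_{[0,1]^n} (‖A(x)‖ + ‖B(x)‖)^{n/(n−1)} dx )^{(n−1)/n} ( ∫_{[0,1]^n} ‖A(x) − B(x)‖^{n/(n−1)} dx )^{1/n}. In particular |𝔻(A) − 𝔻(B)| is bounded by the right-hand side, so 𝔻 is continuous with respect to strong L^{n/(n−1)} convergence on bounded sets. -/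

import Mathlib

open MeasureTheory Filter Topology ENNReal Matrix

noncomputable section

/-- The unit cube `[0,1]^n`, identified with the torus `𝕋^n`. -/
def cube (n : ℕ) : Set (Fin n → ℝ) := Set.univ.pi fun _ => Set.Icc (0:ℝ) 1

/-- The operator norm of a real `n × n` matrix. -/
def opNorm {n : ℕ} (M : Matrix (Fin n) (Fin n) ℝ) : ℝ :=
  ‖Matrix.toEuclideanCLM (𝕜 := ℝ) M‖

namespace DAux

lemma opNorm_nonneg' {n : ℕ} (M : Matrix (Fin n) (Fin n) ℝ) : 0 ≤ opNorm M := norm_nonneg _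

lemma opNorm_sub_le {n : ℕ} (M N : Matrix (Fin n) (Fin n) ℝ) :
    opNorm (M - N) ≤ opNorm M + opNorm N := by
  unfold opNorm
  rw [map_sub]
  exact norm_sub_le _ _

lemma coord_le {n : ℕ} (y : EuclideanSpace ℝ (Fin n)) (i : Fin n) : |y i| ≤ ‖y‖ := by
  rw [EuclideanSpace.norm_eq]
  have : |y i| = Real.sqrt (‖y i‖ ^ 2) := by
    rw [Real.sqrt_sq_eq_abs, abs_norm, Real.norm_eq_abs]
  rw [this]
  apply Real.sqrt_le_sqrt
  exact Finset.single_le_sum (f := fun j => ‖y j‖ ^ 2) (fun j _ => by positivity)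
    (Finset.mem_univ i)

lemma abs_entry_le {n : ℕ} (M : Matrix (Fin n) (Fin n) ℝ) (i j : Fin n) :
    |M i j| ≤ opNorm M := by
  classical
  set x : EuclideanSpace ℝ (Fin n) := EuclideanSpace.single j (1:ℝ) with hx
  have hxnorm : ‖x‖ = 1 := by simp [hx]
  have happ : Matrix.toEuclideanCLM (𝕜 := ℝ) M x
      = (WithLp.equiv 2 _).symm (M *ᵥ Pi.single j 1) := by
    rw [hx]; rfl
  have h1 : |M i j| ≤ ‖Matrix.toEuclideanCLM (𝕜 := ℝ) M x‖ := by
    rw [happ]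
    have h2 := coord_le ((WithLp.equiv 2 _).symm (M *ᵥ Pi.single j 1)) i
    simpa [Matrix.mulVec_single_one, WithLp.equiv_symm_apply, PiLp.toLp_apply] using h2
  calc |M i j| ≤ ‖Matrix.toEuclideanCLM (𝕜 := ℝ) M x‖ := h1
    _ ≤ opNorm M * ‖x‖ := (Matrix.toEuclideanCLM (𝕜 := ℝ) M).le_opNorm x
    _ = opNorm M := by rw [hxnorm, mul_one]

lemma prod_sub_prod_abs_le {ι : Type*} [DecidableEq ι] (s : Finset ι) (f g : ι → ℝ) {C d : ℝ}
    (hC : 0 ≤ C) (hd : 0 ≤ d)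
    (hf : ∀ i ∈ s, |f i| ≤ C) (hg : ∀ i ∈ s, |g i| ≤ C)
    (hfg : ∀ i ∈ s, |f i - g i| ≤ d) :
    |∏ i ∈ s, f i - ∏ i ∈ s, g i| ≤ s.card * C ^ (s.card - 1) * d := by
  induction s using Finset.induction_on with
  | empty => simp
  | @insert a s ha ih =>
    have hfa : |f a| ≤ C := hf a (Finset.mem_insert_self a s)
    have hga : |g a| ≤ C := hg a (Finset.mem_insert_self a s)
    have hfs : ∀ i ∈ s, |f i| ≤ C := fun i hi => hf i (Finset.mem_insert_of_mem hi)
    have hgs : ∀ i ∈ s, |g i| ≤ C := fun i hi => hg i (Finset.mem_insert_of_mem hi)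
    have hP : |∏ i ∈ s, f i| ≤ C ^ s.card := by
      rw [Finset.abs_prod]
      calc (∏ i ∈ s, |f i|) ≤ ∏ _i ∈ s, C := Finset.prod_le_prod (fun i _ => abs_nonneg _) hfs
        _ = C ^ s.card := by rw [Finset.prod_const]
    have ihs := ih hfs hgs (fun i hi => hfg i (Finset.mem_insert_of_mem hi))
    rw [Finset.prod_insert ha, Finset.prod_insert ha, Finset.card_insert_of_notMem ha]
    have key : f a * ∏ i ∈ s, f i - g a * ∏ i ∈ s, g i
        = (f a - g a) * ∏ i ∈ s, f i + g a * (∏ i ∈ s, f i - ∏ i ∈ s, g i) := by ring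
    rw [key]
    calc |(f a - g a) * ∏ i ∈ s, f i + g a * (∏ i ∈ s, f i - ∏ i ∈ s, g i)|
        ≤ |(f a - g a) * ∏ i ∈ s, f i| + |g a * (∏ i ∈ s, f i - ∏ i ∈ s, g i)| := abs_add_le _ _
      _ = |f a - g a| * |∏ i ∈ s, f i| + |g a| * |∏ i ∈ s, f i - ∏ i ∈ s, g i| := by
          rw [abs_mul, abs_mul]
      _ ≤ d * C ^ s.card + C * (s.card * C ^ (s.card - 1) * d) := by
          gcongr
          exact hfg a (Finset.mem_insert_self a s)
      _ ≤ (s.card + 1 : ℝ) * C ^ s.card * d := by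
          have h2 : C * (s.card * C ^ (s.card - 1) * d) ≤ s.card * C ^ s.card * d := by
            rcases Nat.eq_zero_or_pos s.card with h0 | h0
            · simp [h0]
            · have hCC : C * C ^ (s.card - 1) = C ^ s.card := by
                rw [← pow_succ']
                congr 1
                omega
              rw [show C * ((s.card : ℝ) * C ^ (s.card - 1) * d)
                  = (s.card : ℝ) * (C * C ^ (s.card - 1)) * d from by ring, hCC]
          nlinarith [hP, abs_nonneg (∏ i ∈ s, f i)]
      _ = (↑(s.card + 1) : ℝ) * C ^ (s.card + 1 - 1) * d := by push_cast; ring_nf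

lemma abs_det_sub_det_le {n : ℕ} (A B : Matrix (Fin n) (Fin n) ℝ) :
    |A.det - B.det| ≤ (n.factorial : ℝ) * n * (opNorm A + opNorm B) ^ (n - 1) * opNorm (A - B) := by
  classical
  have hC : 0 ≤ opNorm A + opNorm B := add_nonneg (opNorm_nonneg' _) (opNorm_nonneg' _)
  have hd : 0 ≤ opNorm (A - B) := opNorm_nonneg' _
  rw [Matrix.det_apply, Matrix.det_apply, ← Finset.sum_sub_distrib]
  refine (Finset.abs_sum_le_sum_abs _ _).trans ?_
  have hterm : ∀ σ : Equiv.Perm (Fin n),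
      |Equiv.Perm.sign σ • ∏ i, A (σ i) i - Equiv.Perm.sign σ • ∏ i, B (σ i) i|
        ≤ (n : ℝ) * (opNorm A + opNorm B) ^ (n - 1) * opNorm (A - B) := by
    intro σ
    rw [← smul_sub]
    have habs : |Equiv.Perm.sign σ • (∏ i, A (σ i) i - ∏ i, B (σ i) i)|
        = |∏ i, A (σ i) i - ∏ i, B (σ i) i| := by
      rcases Int.units_eq_one_or (Equiv.Perm.sign σ) with h | h <;>
        simp [h, Units.smul_def, abs_sub_comm]
    rw [habs]
    have := prod_sub_prod_abs_le (Finset.univ : Finset (Fin n))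
      (fun i => A (σ i) i) (fun i => B (σ i) i) hC hd
      (fun i _ => (abs_entry_le A _ _).trans (le_add_of_nonneg_right (opNorm_nonneg' _)))
      (fun i _ => (abs_entry_le B _ _).trans (le_add_of_nonneg_left (opNorm_nonneg' _)))
      (fun i _ => by simpa [Matrix.sub_apply] using abs_entry_le (A - B) (σ i) i)
    simpa [Finset.card_univ] using this
  calc (∑ σ : Equiv.Perm (Fin n),
        |Equiv.Perm.sign σ • ∏ i, A (σ i) i - Equiv.Perm.sign σ • ∏ i, B (σ i) i|)
      ≤ ∑ _σ : Equiv.Perm (Fin n),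
          (n : ℝ) * (opNorm A + opNorm B) ^ (n - 1) * opNorm (A - B) :=
        Finset.sum_le_sum (fun σ _ => hterm σ)
    _ = (n.factorial : ℝ) * n * (opNorm A + opNorm B) ^ (n - 1) * opNorm (A - B) := by
        rw [Finset.sum_const, Finset.card_univ, Fintype.card_perm, Fintype.card_fin,
          nsmul_eq_mul]
        ring

lemma abs_rpow_sub_rpow_le {s t r : ℝ} (hs : 0 ≤ s) (ht : 0 ≤ t) (hr0 : 0 < r) (hr1 : r ≤ 1) :
    |s ^ r - t ^ r| ≤ |s - t| ^ r := by
  wlog h : t ≤ s generalizing s t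
  · rw [abs_sub_comm, abs_sub_comm s t]
    exact this ht hs (le_of_not_ge h)
  rw [abs_of_nonneg (sub_nonneg.2 (Real.rpow_le_rpow ht h hr0.le)),
    abs_of_nonneg (sub_nonneg.2 h)]
  have key : s ^ r ≤ t ^ r + (s - t) ^ r := by
    have h1 : s = t + (s - t) := by ring
    calc s ^ r = (t + (s - t)) ^ r := by rw [← h1]
      _ ≤ t ^ r + (s - t) ^ r := by
          have hnn := NNReal.rpow_add_le_add_rpow (Real.toNNReal t) (Real.toNNReal (s - t))
            hr0.le hr1
          have h2 : ((Real.toNNReal t + Real.toNNReal (s - t) : NNReal) : ℝ) = t + (s - t) := by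
            push_cast
            rw [Real.coe_toNNReal _ ht, Real.coe_toNNReal _ (sub_nonneg.2 h)]
          calc (t + (s - t)) ^ r
              = ((Real.toNNReal t + Real.toNNReal (s - t) : NNReal) : ℝ) ^ r := by rw [h2]
            _ = (((Real.toNNReal t + Real.toNNReal (s - t)) ^ r : NNReal) : ℝ) := by
                rw [← NNReal.coe_rpow]
            _ ≤ (((Real.toNNReal t) ^ r + (Real.toNNReal (s - t)) ^ r : NNReal) : ℝ) := by
                exact_mod_cast hnn
            _ = t ^ r + (s - t) ^ r := by
                rw [NNReal.coe_add, NNReal.coe_rpow, NNReal.coe_rpow,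
                  Real.coe_toNNReal _ ht, Real.coe_toNNReal _ (sub_nonneg.2 h)]
  linarith

lemma psd_det_nonneg {n : ℕ} {M : Matrix (Fin n) (Fin n) ℝ} (hM : M.PosSemidef) :
    0 ≤ M.det := by
  rw [hM.1.det_eq_prod_eigenvalues]
  apply Finset.prod_nonneg
  intro i _
  simpa using hM.eigenvalues_nonneg i

end DAux

open DAux

/-- **Strong `L^{n/(n-1)}` continuity estimate for the functional `𝔻`.**
There is a dimensional constant `c > 0` such that for all matrix fields
`A, B : 𝕋^n → Sym^+(n)` with operator norms in `L^{n/(n-1)}`,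
`∫ |det(A)^{1/(n-1)} - det(B)^{1/(n-1)}| ≤ c^{1/(n-1)} (∫ (‖A‖+‖B‖)^{n/(n-1)})^{(n-1)/n}
(∫ ‖A-B‖^{n/(n-1)})^{1/n}`. -/
theorem D_strong_continuity_estimate
    (n : ℕ) (hn : 2 ≤ n) :
    ∃ c : ℝ, 0 < c ∧
      ∀ A B : (Fin n → ℝ) → Matrix (Fin n) (Fin n) ℝ,
        (∀ i j, Measurable fun x => A x i j) →
        (∀ i j, Measurable fun x => B x i j) →
        (∀ x, (A x).PosSemidef) → (∀ x, (B x).PosSemidef) →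
        MemLp (fun x => opNorm (A x)) ((n : ℝ≥0∞) / ((n : ℝ≥0∞) - 1))
          (volume.restrict (cube n)) →
        MemLp (fun x => opNorm (B x)) ((n : ℝ≥0∞) / ((n : ℝ≥0∞) - 1))
          (volume.restrict (cube n)) →
        (∫ x in cube n,
            |(A x).det ^ ((1:ℝ)/((n:ℝ)-1)) - (B x).det ^ ((1:ℝ)/((n:ℝ)-1))|)
          ≤ c ^ ((1:ℝ)/((n:ℝ)-1)) *
            (∫ x in cube n,
                (opNorm (A x) + opNorm (B x)) ^ ((n:ℝ)/((n:ℝ)-1))) ^ (((n:ℝ)-1)/(n:ℝ)) *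
            (∫ x in cube n, opNorm (A x - B x) ^ ((n:ℝ)/((n:ℝ)-1))) ^ ((n:ℝ)⁻¹) := by
  classical
  -- numerics
  have hn1 : (1:ℝ) ≤ (n:ℝ) - 1 := by
    have : (2:ℝ) ≤ (n:ℝ) := by exact_mod_cast hn
    linarith
  have hn1pos : (0:ℝ) < (n:ℝ) - 1 := by linarith
  have hnpos : (0:ℝ) < (n:ℝ) := by linarith
  set r : ℝ := 1/((n:ℝ)-1) with hr
  have hr0 : 0 < r := by positivity
  have hr1 : r ≤ 1 := by
    rw [hr]
    rw [div_le_one hn1pos]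
    exact hn1
  set κ : ℝ := (n.factorial : ℝ) * n with hκ
  have hκ1 : (1:ℝ) ≤ κ := by
    have h1 : (1:ℝ) ≤ (n.factorial : ℝ) := by exact_mod_cast Nat.one_le_iff_ne_zero.2 n.factorial_ne_zero
    have h2 : (1:ℝ) ≤ (n:ℝ) := by linarith
    nlinarith
  have hκ0 : (0:ℝ) < κ := lt_of_lt_of_le one_pos hκ1
  refine ⟨κ ^ (n - 1), pow_pos hκ0 _, ?_⟩
  intro A B hA hB hApsd hBpsd hAmem hBmem
  set μ := volume.restrict (cube n) with hμ
  -- the constant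
  have hcast : ((n - 1 : ℕ) : ℝ) = (n:ℝ) - 1 := by
    have := Nat.cast_sub (le_trans one_le_two hn) (R := ℝ) (m := 1) (n := n)
    simpa using this
  have hcr : (κ ^ (n - 1)) ^ r = κ := by
    rw [← Real.rpow_natCast κ (n-1), ← Real.rpow_mul hκ0.le, hcast, hr,
      mul_one_div, div_self hn1pos.ne', Real.rpow_one]
  -- measurability (work in the pi type, since `Matrix` has no `MeasurableSpace`)
  have hopcont : Continuous fun M : Fin n → Fin n → ℝ => opNorm (Matrix.of M) := by
    have hL : Continuous fun M : Fin n → Fin n → ℝ =>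
        Matrix.toEuclideanCLM (𝕜 := ℝ) (Matrix.of M) := by
      have heq : (fun M : Fin n → Fin n → ℝ => Matrix.toEuclideanCLM (𝕜 := ℝ) (Matrix.of M)) =
          (LinearMap.mk (AddHom.mk (fun M : Fin n → Fin n → ℝ =>
            Matrix.toEuclideanCLM (𝕜 := ℝ) (Matrix.of M))
            (by intro x y; exact map_add (Matrix.toEuclideanCLM (𝕜 := ℝ)) _ _))
            (by intro c x; exact map_smul (Matrix.toEuclideanCLM (𝕜 := ℝ)) c _) :
            (Fin n → Fin n → ℝ) →ₗ[ℝ]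
              (EuclideanSpace ℝ (Fin n) →L[ℝ] EuclideanSpace ℝ (Fin n))) := rfl
      rw [heq]
      exact LinearMap.continuous_of_finiteDimensional _
    exact continuous_norm.comp hL
  have hAm : Measurable fun x => (fun i j => A x i j : Fin n → Fin n → ℝ) :=
    measurable_pi_lambda _ (fun i => measurable_pi_lambda _ (fun j => hA i j))
  have hBm : Measurable fun x => (fun i j => B x i j : Fin n → Fin n → ℝ) :=
    measurable_pi_lambda _ (fun i => measurable_pi_lambda _ (fun j => hB i j))
  have hABm : Measurable fun x => (fun i j => (A x - B x) i j : Fin n → Fin n → ℝ) := by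
    apply measurable_pi_lambda _ (fun i => measurable_pi_lambda _ (fun j => ?_))
    have heq : (fun x => (A x - B x) i j) = fun x => A x i j - B x i j := by
      funext x; simp [Matrix.sub_apply]
    rw [heq]
    exact (hA i j).sub (hB i j)
  have hdm : Measurable fun x => opNorm (A x - B x) := hopcont.measurable.comp hABm
  have hfam : Measurable fun x => opNorm (A x) := hopcont.measurable.comp hAm
  have hfbm : Measurable fun x => opNorm (B x) := hopcont.measurable.comp hBm
  have hfm : Measurable fun x => opNorm (A x) + opNorm (B x) := hfam.add hfbm
  -- abbreviations
  set f : (Fin n → ℝ) → ℝ := fun x => opNorm (A x) + opNorm (B x) with hfdef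
  set d : (Fin n → ℝ) → ℝ := fun x => opNorm (A x - B x) with hddef
  set g : (Fin n → ℝ) → ℝ := fun x => d x ^ r with hgdef
  have hf0 : ∀ x, 0 ≤ f x := fun x => add_nonneg (opNorm_nonneg' _) (opNorm_nonneg' _)
  have hd0 : ∀ x, 0 ≤ d x := fun x => opNorm_nonneg' _
  have hg0 : ∀ x, 0 ≤ g x := fun x => Real.rpow_nonneg (hd0 x) r
  -- ENNReal exponent bookkeeping
  set e : ℝ≥0∞ := (n : ℝ≥0∞) - 1 with he
  have he0 : e ≠ 0 := by
    rw [he]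
    simp only [ne_eq, tsub_eq_zero_iff_le, not_le]
    exact_mod_cast lt_of_lt_of_le Nat.one_lt_two hn
  have hetop : e ≠ ∞ := ne_top_of_le_ne_top (natCast_ne_top n) tsub_le_self
  have hn_ne : (n : ℝ≥0∞) ≠ 0 := Nat.cast_ne_zero.2 (by omega)
  have hn_netop : (n : ℝ≥0∞) ≠ ∞ := natCast_ne_top n
  set p : ℝ≥0∞ := (n : ℝ≥0∞) / ((n : ℝ≥0∞) - 1) with hp
  have hofReal_sub : ENNReal.ofReal ((n:ℝ) - 1) = e := by
    rw [← hcast, ENNReal.ofReal_natCast, ENNReal.natCast_sub, Nat.cast_one, he]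
  have hp_eq : ENNReal.ofReal ((n:ℝ)/((n:ℝ)-1)) = p := by
    rw [ENNReal.ofReal_div_of_pos hn1pos, ENNReal.ofReal_natCast, hofReal_sub, hp, he]
  have hq_eq : ENNReal.ofReal (n:ℝ) = (n : ℝ≥0∞) := ENNReal.ofReal_natCast n
  have hr_eq : ENNReal.ofReal r = 1 / e := by
    rw [hr, ENNReal.ofReal_div_of_pos hn1pos, ENNReal.ofReal_one, hofReal_sub]
  -- MemLp facts
  have hmemf : MemLp f p μ := hAmem.add hBmem
  have hmemd : MemLp d p μ := by
    refine (hAmem.add hBmem).of_le hdm.aestronglyMeasurable (ae_of_all _ fun x => ?_)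
    simp only [Pi.add_apply, Real.norm_eq_abs]
    rw [abs_of_nonneg (hd0 x),
      abs_of_nonneg (add_nonneg (opNorm_nonneg' _) (opNorm_nonneg' _))]
    exact opNorm_sub_le _ _
  have hpdiv : p / ENNReal.ofReal r = (n : ℝ≥0∞) := by
    rw [hr_eq, hp, he, one_div, div_eq_mul_inv, div_eq_mul_inv, inv_inv, mul_assoc,
      ENNReal.inv_mul_cancel he0 hetop, mul_one]
  have hmemg : MemLp g ((n : ℝ≥0∞)) μ := by
    have h0 : ENNReal.ofReal r ≠ 0 := by
      simp only [ne_eq, ENNReal.ofReal_eq_zero, not_le]; exact hr0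
    have htop : ENNReal.ofReal r ≠ ∞ := ENNReal.ofReal_ne_top
    have h := (memLp_norm_rpow_iff (q := ENNReal.ofReal r) (p := p)
      hdm.aestronglyMeasurable h0 htop).2 hmemd
    have heqfun : (fun x => ‖d x‖ ^ (ENNReal.ofReal r).toReal) = g := by
      funext x
      rw [Real.norm_eq_abs, abs_of_nonneg (hd0 x), ENNReal.toReal_ofReal hr0.le, hgdef]
    rw [heqfun, hpdiv] at h
    exact h
  -- conjugate exponents
  have hpq : Real.HolderConjugate ((n:ℝ)/((n:ℝ)-1)) (n:ℝ) := by
    rw [Real.holderConjugate_iff]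
    constructor
    · rw [lt_div_iff₀ hn1pos]; linarith
    · rw [inv_div]
      field_simp
      ring
  -- Integrability of the product
  have h1n : (1:ℝ≥0∞) ≤ (n:ℝ≥0∞) := by exact_mod_cast Nat.one_le_of_lt hn
  have hfg_int : Integrable (fun x => f x * g x) μ := by
    have hsum : (1 : ℝ≥0∞) / 1 = 1 / p + 1 / (n : ℝ≥0∞) := by
      rw [hp, ← he, one_div ((n:ℝ≥0∞)/e), ENNReal.inv_div (Or.inl hetop) (Or.inl he0),
        ENNReal.div_add_div_same, he, tsub_add_cancel_of_le h1n,
        ENNReal.div_self hn_ne hn_netop, div_one]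
    have hsmul : MemLp (f • g) 1 μ := by
      haveI : ENNReal.HolderTriple p (n:ℝ≥0∞) 1 := ⟨by simpa only [one_div] using hsum.symm⟩
      exact hmemg.smul hmemf
    have : (f • g) = fun x => f x * g x := rfl
    rw [this] at hsmul
    exact memLp_one_iff_integrable.mp hsmul
  have hκint : Integrable (fun x => κ * (f x * g x)) μ := hfg_int.const_mul κ
  -- pointwise bound
  have ptw : ∀ x, |(A x).det ^ r - (B x).det ^ r| ≤ κ * (f x * g x) := by
    intro x
    have hCx : 0 ≤ f x := hf0 x
    have hdx : 0 ≤ d x := hd0 x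
    have s1 : |(A x).det ^ r - (B x).det ^ r| ≤ |(A x).det - (B x).det| ^ r :=
      abs_rpow_sub_rpow_le (psd_det_nonneg (hApsd x)) (psd_det_nonneg (hBpsd x)) hr0 hr1
    have s2 : |(A x).det - (B x).det| ^ r ≤ (κ * f x ^ (n-1) * d x) ^ r := by
      apply Real.rpow_le_rpow (abs_nonneg _) _ hr0.le
      exact abs_det_sub_det_le (A x) (B x)
    have s3 : (κ * f x ^ (n-1) * d x) ^ r = κ ^ r * (f x ^ (n-1)) ^ r * (d x ^ r) := by
      rw [Real.mul_rpow (mul_nonneg hκ0.le (pow_nonneg hCx _)) hdx,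
        Real.mul_rpow hκ0.le (pow_nonneg hCx _)]
    have s4 : ((f x ^ (n-1) : ℝ)) ^ r = f x := by
      rw [← Real.rpow_natCast (f x) (n-1), ← Real.rpow_mul hCx, hcast, hr, mul_one_div,
        div_self hn1pos.ne', Real.rpow_one]
    have s5 : κ ^ r ≤ κ := by
      calc κ ^ r ≤ κ ^ (1:ℝ) := Real.rpow_le_rpow_of_exponent_le hκ1 hr1
        _ = κ := Real.rpow_one κ
    calc |(A x).det ^ r - (B x).det ^ r| ≤ (κ * f x ^ (n-1) * d x) ^ r := s1.trans s2
      _ = κ ^ r * (f x * g x) := by rw [s3, s4, hgdef]; ring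
      _ ≤ κ * (f x * g x) :=
          mul_le_mul_of_nonneg_right s5 (mul_nonneg hCx (hg0 x))
  -- Hölder
  have h3 : ∫ x, f x * g x ∂μ
      ≤ (∫ x, f x ^ ((n:ℝ)/((n:ℝ)-1)) ∂μ) ^ (1/((n:ℝ)/((n:ℝ)-1)))
        * (∫ x, g x ^ (n:ℝ) ∂μ) ^ (1/(n:ℝ)) := by
    refine integral_mul_le_Lp_mul_Lq_of_nonneg hpq (ae_of_all _ hf0) (ae_of_all _ hg0) ?_ ?_
    · rw [hp_eq]; exact hmemf
    · rw [hq_eq]; exact hmemg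
  have hgrw : (fun x => g x ^ (n:ℝ)) = fun x => d x ^ ((n:ℝ)/((n:ℝ)-1)) := by
    funext x
    rw [hgdef, ← Real.rpow_mul (hd0 x), hr, one_div_mul_eq_div]
  rw [hgrw] at h3
  have hexp1 : 1/((n:ℝ)/((n:ℝ)-1)) = ((n:ℝ)-1)/(n:ℝ) := one_div_div _ _
  rw [hexp1, one_div (n:ℝ)] at h3
  -- putting everything together
  calc (∫ x, |(A x).det ^ r - (B x).det ^ r| ∂μ)
      ≤ ∫ x, κ * (f x * g x) ∂μ :=
        integral_mono_of_nonneg (ae_of_all _ fun x => abs_nonneg _) hκint (ae_of_all _ ptw)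
    _ = κ * ∫ x, f x * g x ∂μ := integral_const_mul κ _
    _ ≤ κ * ((∫ x, f x ^ ((n:ℝ)/((n:ℝ)-1)) ∂μ) ^ (((n:ℝ)-1)/(n:ℝ))
          * (∫ x, d x ^ ((n:ℝ)/((n:ℝ)-1)) ∂μ) ^ ((n:ℝ)⁻¹)) := by
        apply mul_le_mul_of_nonneg_left h3 hκ0.le
    _ = (κ ^ (n-1)) ^ r * (∫ x, f x ^ ((n:ℝ)/((n:ℝ)-1)) ∂μ) ^ (((n:ℝ)-1)/(n:ℝ))
          * (∫ x, d x ^ ((n:ℝ)/((n:ℝ)-1)) ∂μ) ^ ((n:ℝ)⁻¹) := by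
        rw [hcr]; ring
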